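/- Let X_n be the Class DIII Wigner-type ensemble, let m ≥ 3, let g = γ^ν be a cyclic shift of [m], and let P = (P_{i,l}) be a multi-index in S_n^{good}(π̂_g) such that for every l ∈ [m] the 2×2 matrix [[p_{1,l}, q_{1,l}],[p_{2,g(l)}, q_{2,g(l)}]] equals nΔ_l + A(a_l,b_l) for some Δ-matrix Δ_l and some a_l ≠ b_l in [n]. If P_{1,l} ≠ P_{2,g(l)} for some l ∈ [m], then P_{1,l} ≠ P_{2,g(l)} for all l ∈ [m]; moreover the number of l ∈ [m] for which Δ_l is a step is even, and ∏_{l=1}^m E[a_n(P_{1,l})·a_n(P_{2,g(l)})] = σ^{2m}. -/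

import Mathlib

open MeasureTheory ProbabilityTheory Matrix Filter

noncomputable section

/-- `blk d a` is index `a` in the first block row/column if `d = 0`, and in the
second block row/column otherwise (encoding `n·d + a` in `[2n]`). -/
def blk {n : ℕ} (d : ℕ) (a : Fin n) : Fin n ⊕ Fin n :=
  if d = 0 then Sum.inl a else Sum.inr a

/-- A Δ-matrix: a `2 × 2` matrix with entries in `{0,1}` whose entries sum to an
even number. -/
def IsDelta (D : Matrix (Fin 2) (Fin 2) ℕ) : Prop :=
  (∀ i j, D i j ≤ 1) ∧ Even (D 0 0 + D 0 1 + D 1 0 + D 1 1)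

/-- The (unnormalized) class DIII block matrix built from `X₁, X₂`; its `(p,q)` entry
is `a_n(p,q)`, the `(p,q)` entry of `√(2n)·X_n`. -/
def dIIIBlock {n : ℕ} (X₁ X₂ : Matrix (Fin n) (Fin n) ℂ) :
    Matrix (Fin n ⊕ Fin n) (Fin n ⊕ Fin n) ℂ :=
  Matrix.fromBlocks X₁ X₂ X₂ (-X₁)

/-- The space `M_n^{DIII}`: block matrices `[[X₁,X₂],[X₂,−X₁]]` with `X₁, X₂`
skew-symmetric with purely imaginary entries. `[2n]` is encoded as `Fin n ⊕ Fin n`. -/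
def MDIII (n : ℕ) : Set (Matrix (Fin n ⊕ Fin n) (Fin n ⊕ Fin n) ℂ) :=
  {M | ∃ X₁ X₂ : Matrix (Fin n) (Fin n) ℂ,
    (∀ a b, (X₁ a b).re = 0) ∧ (∀ a b, (X₂ a b).re = 0) ∧
    X₁ᵀ = -X₁ ∧ X₂ᵀ = -X₂ ∧ M = Matrix.fromBlocks X₁ X₂ X₂ (-X₁)}

/-- The coordinate functional `X ↦ X_{p,q}` on `M_n^{DIII}` is nonzero. -/
def NonzeroAtDIII (n : ℕ) (P : (Fin n ⊕ Fin n) × (Fin n ⊕ Fin n)) : Prop :=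
  ∃ M ∈ MDIII n, M P.1 P.2 ≠ 0

/-- `(p,q) ∼ (r,s)`: both coordinate functionals on `M_n^{DIII}` are nonzero and
equal up to sign. -/
def simDIII (n : ℕ) (P Q : (Fin n ⊕ Fin n) × (Fin n ⊕ Fin n)) : Prop :=
  NonzeroAtDIII n P ∧ NonzeroAtDIII n Q ∧
    ((∀ M ∈ MDIII n, M Q.1 Q.2 = M P.1 P.2) ∨
      (∀ M ∈ MDIII n, M Q.1 Q.2 = -(M P.1 P.2)))

/-- A multi-index `P = (P_{i,l}) = ((p_{i,l},q_{i,l}))` is consistent if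
`q_{i,l} = p_{i,l+1}` cyclically, for `i = 1, 2`. -/
def IsConsistent {n m : ℕ} [NeZero m]
    (P : Fin 2 → Fin m → ((Fin n ⊕ Fin n) × (Fin n ⊕ Fin n))) : Prop :=
  ∀ i l, (P i l).2 = (P i (l + 1)).1

/-- `P ∈ S_n^{good}(π̂_g)`: `P` is a consistent multi-index, every `P_{i,l}` lies in
the domain of `∼`, and the `∼`-relations among the `2m` index pairs are exactly those
given by the pair partition `π̂_g = {{(1,l),(2,g(l))} : l ∈ [m]}`. -/
def SGoodDIII (n m : ℕ) [NeZero m] (g : Fin m → Fin m)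
    (P : Fin 2 → Fin m → ((Fin n ⊕ Fin n) × (Fin n ⊕ Fin n))) : Prop :=
  IsConsistent P ∧ (∀ i l, NonzeroAtDIII n (P i l)) ∧
    ∀ i l i' l', simDIII n (P i l) (P i' l') ↔
      ((i = i' ∧ l = l') ∨ (i = 0 ∧ i' = 1 ∧ l' = g l) ∨ (i = 1 ∧ i' = 0 ∧ l = g l'))

lemma blk_inj {n : ℕ} {d d' : ℕ} (hd : d ≤ 1) (hd' : d' ≤ 1) {a a' : Fin n}
    (h : blk d a = blk d' a') : d = d' ∧ a = a' := by
  unfold blk at h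
  interval_cases d <;> interval_cases d' <;> simp_all

lemma sq_of_im (z : ℂ) (h : z.re = 0) : z ^ 2 = -(((‖z‖)^2 : ℝ) : ℂ) := by
  rw [Complex.sq_norm]
  apply Complex.ext <;>
    simp [pow_two, Complex.mul_re, Complex.mul_im, h, Complex.normSq_apply]

lemma dIII00 {n : ℕ} (X₁ X₂ : Matrix (Fin n) (Fin n) ℂ) (a b : Fin n) :
    dIIIBlock X₁ X₂ (blk 0 a) (blk 0 b) = X₁ a b := by simp [dIIIBlock, blk]

lemma dIII01 {n : ℕ} (X₁ X₂ : Matrix (Fin n) (Fin n) ℂ) (a b : Fin n) :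
    dIIIBlock X₁ X₂ (blk 0 a) (blk 1 b) = X₂ a b := by simp [dIIIBlock, blk]

lemma dIII10 {n : ℕ} (X₁ X₂ : Matrix (Fin n) (Fin n) ℂ) (a b : Fin n) :
    dIIIBlock X₁ X₂ (blk 1 a) (blk 0 b) = X₂ a b := by simp [dIIIBlock, blk]

lemma dIII11 {n : ℕ} (X₁ X₂ : Matrix (Fin n) (Fin n) ℂ) (a b : Fin n) :
    dIIIBlock X₁ X₂ (blk 1 a) (blk 1 b) = -(X₁ a b) := by simp [dIIIBlock, blk]

theorem stmt8
    {Ω : Type*} [MeasurableSpace Ω] (μ : Measure Ω) [IsProbabilityMeasure μ]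
    (σ : ℝ) (hσ : 0 < σ)
    (X : (n : ℕ) → Fin 2 → Ω → Matrix (Fin n) (Fin n) ℂ)
    (hmeas : ∀ n i a b, Measurable fun ω => X n i ω a b)
    (him : ∀ n i ω a b, (X n i ω a b).re = 0)
    (hskew : ∀ n i ω a b, X n i ω b a = - X n i ω a b)
    (hindep : ∀ n, iIndepFun
      (fun (v : {v : Fin 2 × Fin n × Fin n // v.2.1 < v.2.2}) ω =>
        X n v.1.1 ω v.1.2.1 v.1.2.2) μ)
    (hcent : ∀ n i a b, ∫ ω, X n i ω a b ∂μ = 0)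
    (hvar : ∀ n i (a b : Fin n), a ≠ b → ∫ ω, ‖X n i ω a b‖ ^ 2 ∂μ = σ ^ 2)
    (hmom : ∀ k : ℕ, ∃ C : ℝ, ∀ n i (a b : Fin n),
      ∫ ω, ‖X n i ω a b‖ ^ k ∂μ ≤ C)
    (m : ℕ) [NeZero m] (hm : 3 ≤ m) (ν : ℕ) (hν : ν < m)
    (g : Fin m → Fin m) (hg : g = fun l => l + ⟨ν, hν⟩)
    (n : ℕ) (P : Fin 2 → Fin m → ((Fin n ⊕ Fin n) × (Fin n ⊕ Fin n)))
    (hP : SGoodDIII n m g P)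
    (Δ : Fin m → Matrix (Fin 2) (Fin 2) ℕ) (hΔ : ∀ l, IsDelta (Δ l))
    (a b : Fin m → Fin n) (hab : ∀ l, a l ≠ b l)
    -- `[[p_{1,l}, q_{1,l}],[p_{2,g(l)}, q_{2,g(l)}]] = nΔ_l + A(a_l, b_l)`
    (hinst : ∀ l, P 0 l = (blk (Δ l 0 0) (a l), blk (Δ l 0 1) (b l)) ∧
      P 1 (g l) = (blk (Δ l 1 0) (a l), blk (Δ l 1 1) (b l)))
    (hex : ∃ l, P 0 l ≠ P 1 (g l)) :
    (∀ l, P 0 l ≠ P 1 (g l)) ∧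
    -- the number of `l` for which `Δ_l` is a step is even
    Even (Set.ncard {l : Fin m | Δ l 0 0 ≠ Δ l 0 1 ∧ Δ l 1 0 ≠ Δ l 1 1}) ∧
    ∏ l : Fin m, ∫ ω, dIIIBlock (X n 0 ω) (X n 1 ω) (P 0 l).1 (P 0 l).2 *
        dIIIBlock (X n 0 ω) (X n 1 ω) (P 1 (g l)).1 (P 1 (g l)).2 ∂μ
      = (σ : ℂ) ^ (2 * m) := by
  obtain ⟨hcons, -, -⟩ := hP
  -- successor relations coming from consistency
  have hb : ∀ l : Fin m, b l = a (l + 1) ∧ Δ l 0 1 = Δ (l+1) 0 0 ∧ Δ l 1 1 = Δ (l+1) 1 0 := by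
    intro l
    have h0 : blk (Δ l 0 1) (b l) = blk (Δ (l+1) 0 0) (a (l+1)) := by
      have h := hcons 0 l
      rw [(hinst l).1, (hinst (l+1)).1] at h
      exact h
    have hgl : g l + 1 = g (l + 1) := by
      rw [hg]; exact add_right_comm l ⟨ν, hν⟩ 1
    have h1 : blk (Δ l 1 1) (b l) = blk (Δ (l+1) 1 0) (a (l+1)) := by
      have h := hcons 1 (g l)
      rw [hgl, (hinst l).2, (hinst (l+1)).2] at h
      exact h
    have e0 := blk_inj ((hΔ l).1 0 1) ((hΔ (l+1)).1 0 0) h0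
    have e1 := blk_inj ((hΔ l).1 1 1) ((hΔ (l+1)).1 1 0) h1
    exact ⟨e0.2, e0.1, e1.1⟩
  -- the "column difference" invariant is constant and equals 1
  have hD1 : ∀ l : Fin m, (Δ l 0 0 + Δ l 1 0) % 2 = 1 := by
    have hsucc : ∀ l : Fin m, (Δ (l+1) 0 0 + Δ (l+1) 1 0) % 2 = (Δ l 0 0 + Δ l 1 0) % 2 := by
      intro l
      obtain ⟨-, h01, h11⟩ := hb l
      have hpar := (hΔ l).2
      rw [Nat.even_iff] at hpar
      rw [← h01, ← h11]
      omega
    open Fin.NatCast in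
    have hconst : ∀ k : ℕ,
        (Δ ((k : Fin m)) 0 0 + Δ ((k : Fin m)) 1 0) % 2 = (Δ 0 0 0 + Δ 0 1 0) % 2 := by
      intro k
      induction k with
      | zero => norm_num
      | succ k ih =>
        have hcast : ((k+1 : ℕ) : Fin m) = (k : Fin m) + 1 := by push_cast; ring
        rw [hcast, hsucc]; exact ih
    have hall : ∀ l l' : Fin m, (Δ l 0 0 + Δ l 1 0) % 2 = (Δ l' 0 0 + Δ l' 1 0) % 2 := by
      intro l l'
      have h1 := hconst l.val; have h2 := hconst l'.val
      rw [Fin.cast_val_eq_self] at h1 h2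
      omega
    obtain ⟨l0, hl0⟩ := hex
    have hkey : (Δ l0 0 0 + Δ l0 1 0) % 2 = 1 := by
      by_contra hcon
      apply hl0
      have hpar := (hΔ l0).2
      rw [Nat.even_iff] at hpar
      have b00 := (hΔ l0).1 0 0; have b01 := (hΔ l0).1 0 1
      have b10 := (hΔ l0).1 1 0; have b11 := (hΔ l0).1 1 1
      have e1 : Δ l0 0 0 = Δ l0 1 0 := by omega
      have e2 : Δ l0 0 1 = Δ l0 1 1 := by omega
      rw [(hinst l0).1, (hinst l0).2, e1, e2]
    intro l
    rw [hall l l0]; exact hkey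
  -- Part 1
  have part1 : ∀ l, P 0 l ≠ P 1 (g l) := by
    intro l heq
    rw [(hinst l).1, (hinst l).2] at heq
    have h1 : blk (Δ l 0 0) (a l) = blk (Δ l 1 0) (a l) := congrArg Prod.fst heq
    have h2 := (blk_inj ((hΔ l).1 0 0) ((hΔ l).1 1 0) h1).1
    have := hD1 l
    omega
  -- Part 2
  have heven : Even ((Finset.univ.filter fun l : Fin m => Δ l 0 0 ≠ Δ l 0 1).card) := by
    have hfe : (Finset.univ.filter fun l : Fin m => Δ l 0 0 ≠ Δ l 0 1)
        = Finset.univ.filter fun l : Fin m => Δ l 0 0 ≠ Δ (l+1) 0 0 :=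
      Finset.filter_congr (fun l _ => by rw [(hb l).2.1])
    rw [hfe, Nat.even_iff]
    have key : ∑ l : Fin m, (Δ l 0 0 + Δ (l+1) 0 0)
        = (Finset.univ.filter fun l : Fin m => Δ l 0 0 ≠ Δ (l+1) 0 0).card
          + 2 * ∑ l : Fin m, Δ l 0 0 * Δ (l+1) 0 0 := by
      rw [Finset.card_filter, Finset.mul_sum, ← Finset.sum_add_distrib]
      refine Finset.sum_congr rfl fun l _ => ?_
      have b1 := (hΔ l).1 0 0
      have b2 := (hΔ (l+1)).1 0 0
      rcases Nat.le_one_iff_eq_zero_or_eq_one.mp b1 with h1 | h1 <;>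
        rcases Nat.le_one_iff_eq_zero_or_eq_one.mp b2 with h2 | h2 <;>
        rw [h1, h2] <;> norm_num
    have hshift : ∑ l : Fin m, Δ (l+1) 0 0 = ∑ l : Fin m, Δ l 0 0 :=
      Fintype.sum_equiv (Equiv.addRight (1 : Fin m)) _ _ (fun l => rfl)
    have lhs : ∑ l : Fin m, (Δ l 0 0 + Δ (l+1) 0 0) = 2 * ∑ l : Fin m, Δ l 0 0 := by
      rw [Finset.sum_add_distrib, hshift]; ring
    omega
  have hset : {l : Fin m | Δ l 0 0 ≠ Δ l 0 1 ∧ Δ l 1 0 ≠ Δ l 1 1}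
      = ↑(Finset.univ.filter fun l : Fin m => Δ l 0 0 ≠ Δ l 0 1) := by
    ext l
    simp only [Set.mem_setOf_eq, Finset.coe_filter, Finset.mem_univ, true_and]
    have hpar := (hΔ l).2
    rw [Nat.even_iff] at hpar
    have b00 := (hΔ l).1 0 0; have b01 := (hΔ l).1 0 1
    have b10 := (hΔ l).1 1 0; have b11 := (hΔ l).1 1 1
    constructor
    · exact fun h => h.1
    · intro h; exact ⟨h, by omega⟩
  -- integral of the square of a purely imaginary entry
  have hsq : ∀ (i : Fin 2) (u v : Fin n), u ≠ v →
      ∫ ω, (X n i ω u v) ^ 2 ∂μ = -((σ:ℂ) ^ 2) := by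
    intro i u v huv
    calc ∫ ω, (X n i ω u v)^2 ∂μ
        = ∫ ω, -((((‖X n i ω u v‖)^2 : ℝ)) : ℂ) ∂μ :=
          integral_congr_ae (Filter.Eventually.of_forall fun ω =>
            sq_of_im _ (him n i ω u v))
      _ = -((σ:ℂ)^2) := by
          rw [integral_neg]
          have hir : ∫ ω, (((‖X n i ω u v‖)^2 : ℝ) : ℂ) ∂μ
              = (((∫ ω, (‖X n i ω u v‖)^2 ∂μ : ℝ)) : ℂ) := integral_ofReal
          rw [hir, hvar n i u v huv]
          push_cast; ring
  -- the value of each factor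
  have hI : ∀ l : Fin m,
      (∫ ω, dIIIBlock (X n 0 ω) (X n 1 ω) (P 0 l).1 (P 0 l).2 *
          dIIIBlock (X n 0 ω) (X n 1 ω) (P 1 (g l)).1 (P 1 (g l)).2 ∂μ)
        = if Δ l 0 0 ≠ Δ l 0 1 then -((σ:ℂ)^2) else (σ:ℂ)^2 := by
    intro l
    have b00 := (hΔ l).1 0 0; have b01 := (hΔ l).1 0 1
    have b10 := (hΔ l).1 1 0; have b11 := (hΔ l).1 1 1
    have hpar := (hΔ l).2
    rw [Nat.even_iff] at hpar
    have hD := hD1 l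
    rw [(hinst l).1, (hinst l).2]
    obtain H00 | H00 : Δ l 0 0 = 0 ∨ Δ l 0 0 = 1 := by omega
    all_goals obtain H01 | H01 : Δ l 0 1 = 0 ∨ Δ l 0 1 = 1 := by omega
    · -- (0,0): rows (0,0) and (1,1)
      have H10 : Δ l 1 0 = 1 := by omega
      have H11 : Δ l 1 1 = 1 := by omega
      rw [H00, H01, H10, H11, if_neg (by omega)]
      calc ∫ ω, dIIIBlock (X n 0 ω) (X n 1 ω) (blk 0 (a l), blk 0 (b l)).1
              (blk 0 (a l), blk 0 (b l)).2 *
            dIIIBlock (X n 0 ω) (X n 1 ω) (blk 1 (a l), blk 1 (b l)).1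
              (blk 1 (a l), blk 1 (b l)).2 ∂μ
          = ∫ ω, -((X n 0 ω (a l) (b l))^2) ∂μ :=
            integral_congr_ae (Filter.Eventually.of_forall fun ω => by
              simp only [dIII00, dIII11]; ring)
        _ = (σ:ℂ)^2 := by rw [integral_neg, hsq 0 (a l) (b l) (hab l)]; ring
    · -- (0,1): rows (0,1) and (1,0)
      have H10 : Δ l 1 0 = 1 := by omega
      have H11 : Δ l 1 1 = 0 := by omega
      rw [H00, H01, H10, H11, if_pos (by omega)]
      calc ∫ ω, dIIIBlock (X n 0 ω) (X n 1 ω) (blk 0 (a l), blk 1 (b l)).1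
              (blk 0 (a l), blk 1 (b l)).2 *
            dIIIBlock (X n 0 ω) (X n 1 ω) (blk 1 (a l), blk 0 (b l)).1
              (blk 1 (a l), blk 0 (b l)).2 ∂μ
          = ∫ ω, (X n 1 ω (a l) (b l))^2 ∂μ :=
            integral_congr_ae (Filter.Eventually.of_forall fun ω => by
              simp only [dIII01, dIII10]; ring)
        _ = -((σ:ℂ)^2) := hsq 1 (a l) (b l) (hab l)
    · -- (1,0): rows (1,0) and (0,1)
      have H10 : Δ l 1 0 = 0 := by omega
      have H11 : Δ l 1 1 = 1 := by omega
      rw [H00, H01, H10, H11, if_pos (by omega)]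
      calc ∫ ω, dIIIBlock (X n 0 ω) (X n 1 ω) (blk 1 (a l), blk 0 (b l)).1
              (blk 1 (a l), blk 0 (b l)).2 *
            dIIIBlock (X n 0 ω) (X n 1 ω) (blk 0 (a l), blk 1 (b l)).1
              (blk 0 (a l), blk 1 (b l)).2 ∂μ
          = ∫ ω, (X n 1 ω (a l) (b l))^2 ∂μ :=
            integral_congr_ae (Filter.Eventually.of_forall fun ω => by
              simp only [dIII01, dIII10]; ring)
        _ = -((σ:ℂ)^2) := hsq 1 (a l) (b l) (hab l)
    · -- (1,1): rows (1,1) and (0,0)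
      have H10 : Δ l 1 0 = 0 := by omega
      have H11 : Δ l 1 1 = 0 := by omega
      rw [H00, H01, H10, H11, if_neg (by omega)]
      calc ∫ ω, dIIIBlock (X n 0 ω) (X n 1 ω) (blk 1 (a l), blk 1 (b l)).1
              (blk 1 (a l), blk 1 (b l)).2 *
            dIIIBlock (X n 0 ω) (X n 1 ω) (blk 0 (a l), blk 0 (b l)).1
              (blk 0 (a l), blk 0 (b l)).2 ∂μ
          = ∫ ω, -((X n 0 ω (a l) (b l))^2) ∂μ :=
            integral_congr_ae (Filter.Eventually.of_forall fun ω => by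
              simp only [dIII00, dIII11]; ring)
        _ = (σ:ℂ)^2 := by rw [integral_neg, hsq 0 (a l) (b l) (hab l)]; ring
  refine ⟨part1, ?_, ?_⟩
  · rw [hset, Set.ncard_coe_finset]; exact heven
  · rw [Finset.prod_congr rfl (fun l _ => hI l), Finset.prod_ite,
      Finset.prod_const, Finset.prod_const]
    have hneg : ((-((σ:ℂ)^2)) ^ (Finset.univ.filter fun l : Fin m => Δ l 0 0 ≠ Δ l 0 1).card)
        = ((σ:ℂ)^2) ^ (Finset.univ.filter fun l : Fin m => Δ l 0 0 ≠ Δ l 0 1).card := by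
      rw [neg_pow, heven.neg_one_pow, one_mul]
    rw [hneg, ← pow_add]
    have hcard : (Finset.univ.filter fun l : Fin m => Δ l 0 0 ≠ Δ l 0 1).card
        + (Finset.univ.filter fun l : Fin m => ¬ (Δ l 0 0 ≠ Δ l 0 1)).card = m := by
      rw [Finset.card_filter_add_card_filter_not, Finset.card_univ, Fintype.card_fin]
    rw [hcard, pow_mul]
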